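/- For both the pure state Ω(γ) and the Werner state ρ_W(F) (F ≥ 1/4), the minimum error rate satisfies δ_min = (1 − √(2 D_g))/2, where D_g is the geometric discord of the respective state. -/

import Mathlib

open Matrix Kronecker Complex

noncomputable section

abbrev M2 := Matrix (Fin 2) (Fin 2) ℂ
abbrev M4 := Matrix (Fin 2 × Fin 2) (Fin 2 × Fin 2) ℂ

/-- Pauli matrices -/
def σ1 : M2 := !![0, 1; 1, 0]
def σ2 : M2 := !![0, -Complex.I; Complex.I, 0]
def σ3 : M2 := !![1, 0; 0, -1]
def σ : Fin 3 → M2 := ![σ1, σ2, σ3]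

/-- computational basis kets of one qubit -/
def up : Fin 2 → ℂ := ![1, 0]
def dn : Fin 2 → ℂ := ![0, 1]

/-- the pure state |Ω(γ)⟩ = cos(π/4-γ/2)|↑↑⟩ + sin(π/4-γ/2)|↓↓⟩ as a vector -/
def Ωvec (γ : ℝ) : Fin 2 × Fin 2 → ℂ := fun p =>
  (Real.cos (Real.pi/4 - γ/2) : ℂ) * (up p.1 * up p.2)
  + (Real.sin (Real.pi/4 - γ/2) : ℂ) * (dn p.1 * dn p.2)

/-- the rank-one projector |v⟩⟨v| -/
def proj (v : Fin 2 × Fin 2 → ℂ) : M4 :=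
  Matrix.vecMulVec v (fun p => (starRingEnd ℂ) (v p))

/-- the density operator of |Ω(γ)⟩ -/
def Ωstate (γ : ℝ) : M4 := proj (Ωvec γ)

/-- the Bell states -/
def Φp : Fin 2 × Fin 2 → ℂ := fun p => ((up p.1 * up p.2) + (dn p.1 * dn p.2)) / (Real.sqrt 2 : ℂ)
def Φm : Fin 2 × Fin 2 → ℂ := fun p => ((up p.1 * up p.2) - (dn p.1 * dn p.2)) / (Real.sqrt 2 : ℂ)
def Ψp : Fin 2 × Fin 2 → ℂ := fun p => ((up p.1 * dn p.2) + (dn p.1 * up p.2)) / (Real.sqrt 2 : ℂ)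
def Ψm : Fin 2 × Fin 2 → ℂ := fun p => ((up p.1 * dn p.2) - (dn p.1 * up p.2)) / (Real.sqrt 2 : ℂ)

/-- the Werner state in Bloch form -/
def ρW (F : ℝ) : M4 :=
  (1/4 : ℂ) • ((1 : M4) + (((4*F-1)/3 : ℝ) : ℂ) • (σ1 ⊗ₖ σ1 - σ2 ⊗ₖ σ2 + σ3 ⊗ₖ σ3))

/-- σ·n for a direction n ∈ ℝ³ -/
def pdot (n : Fin 3 → ℝ) : M2 := ∑ i, ((n i : ℂ)) • σ i

/-- correlation function ⟨A ⊗ B⟩ in the state ρ -/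
def corr (ρ : M4) (A B : M2) : ℝ := (Matrix.trace (ρ * (A ⊗ₖ B))).re

/-- squared Hilbert-Schmidt norm -/
def hs2 (A : M4) : ℝ := (Matrix.trace (A * Aᴴ)).re

/-- the post-measurement (classical-quantum) state after a projective
measurement {P, 1-P} on the first qubit -/
def postMeas (P : M2) (ρ : M4) : M4 :=
  (P ⊗ₖ (1 : M2)) * ρ * (P ⊗ₖ (1 : M2))
  + (((1 : M2) - P) ⊗ₖ (1 : M2)) * ρ * (((1 : M2) - P) ⊗ₖ (1 : M2))

/-- geometric discord: minimal squared Hilbert-Schmidt distance of ρ to the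
classical-quantum states obtained by rank-one projective measurements on qubit 1 -/
def Dg (ρ : M4) : ℝ :=
  sInf {r : ℝ | ∃ P : M2, P.IsHermitian ∧ P * P = P ∧ P.trace = 1 ∧
    r = hs2 (ρ - postMeas P ρ)}

/-- minimal error rate of the key in the general EPR protocol -/
def δmin (ρ : M4) : ℝ :=
  1/2 - (1/4) * (sSup {r : ℝ | ∃ n : Fin 3 → ℝ, (∑ i, n i ^ 2) = 1 ∧ r = corr ρ σ1 (pdot n)}
    + sSup {r : ℝ | ∃ n : Fin 3 → ℝ, (∑ i, n i ^ 2) = 1 ∧ r = corr ρ σ2 (pdot n)})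

/-! ### Auxiliary lemmas -/

lemma trace_mul_eq' {n : Type*} [Fintype n] (A B : Matrix n n ℂ) :
    Matrix.trace (A * B) = ∑ p, ∑ q, A p q * B q p := by
  simp [Matrix.trace, Matrix.mul_apply, Matrix.diag]

lemma conj_mul_proj (A : M4) (v : Fin 2 × Fin 2 → ℂ) :
    A * proj v * Aᴴ = proj (A *ᵥ v) := by
  ext i j
  simp only [proj, Matrix.mul_apply, Matrix.vecMulVec_apply, Matrix.conjTranspose_apply,
    Matrix.mulVec, dotProduct, Finset.sum_mul, Finset.mul_sum, map_sum, _root_.map_mul,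
    map_add, Fintype.sum_prod_type, Fin.sum_univ_two, RCLike.star_def]
  ring

lemma proj_hermitian (v : Fin 2 × Fin 2 → ℂ) : (proj v)ᴴ = proj v := by
  ext i j
  simp [proj, Matrix.vecMulVec_apply, mul_comm]

lemma trace_proj_mul (a b : Fin 2 × Fin 2 → ℂ) :
    Matrix.trace (proj a * proj b) = (a ⬝ᵥ star b) * (star a ⬝ᵥ b) := by
  rw [trace_mul_eq']
  simp only [proj, Matrix.vecMulVec_apply, dotProduct, Pi.star_apply,
    Finset.sum_mul, Finset.mul_sum, RCLike.star_def,
    Fintype.sum_prod_type, Fin.sum_univ_two]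
  ring

lemma kron_one_herm (P : M2) (hH : P.IsHermitian) : (P ⊗ₖ (1:M2))ᴴ = P ⊗ₖ 1 := by
  ext ⟨i,j⟩ ⟨k,l⟩
  simp only [Matrix.conjTranspose_apply, Matrix.kroneckerMap_apply, Matrix.one_apply,
    _root_.map_mul]
  by_cases h : j = l <;> simp [h, eq_comm, ← RCLike.star_def, hH.apply]

lemma postMeas_proj (P : M2) (hH : P.IsHermitian) (v : Fin 2 × Fin 2 → ℂ) :
    postMeas P (proj v) = proj ((P ⊗ₖ 1) *ᵥ v) + proj (((1 - P) ⊗ₖ 1) *ᵥ v) := by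
  have hH' : (1 - P).IsHermitian := (Matrix.isHermitian_one).sub hH
  rw [postMeas, ← conj_mul_proj, ← conj_mul_proj, kron_one_herm P hH, kron_one_herm _ hH']

set_option maxHeartbeats 1000000 in
lemma hs2_omega (γ p : ℝ) (q r : ℂ) (hq : (starRingEnd ℂ) q = r)
    (hqr : q * r = (p:ℂ) - (p:ℂ)^2) :
    hs2 (Ωstate γ - postMeas !![(p:ℂ), q; r, 1-(p:ℂ)] (Ωstate γ))
      = (1 - Real.sin γ^2*(2*p-1)^2)/2 := by
  have hq2 : (starRingEnd ℂ) r = q := by rw [← hq, Complex.conj_conj]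
  set c := Real.cos (Real.pi/4 - γ/2) with hc
  set s := Real.sin (Real.pi/4 - γ/2) with hs'
  set P : M2 := !![(p:ℂ), q; r, 1-(p:ℂ)] with hPdef
  have h2 : s^2 + c^2 = 1 := by rw [hc, hs']; exact Real.sin_sq_add_cos_sq _
  have hsin : Real.sin γ = c^2 - s^2 := by
    rw [show γ = Real.pi/2 - 2*(Real.pi/4 - γ/2) by ring, Real.sin_pi_div_two_sub,
      Real.cos_two_mul, ← hc]
    linarith [h2]
  have hcs : (c:ℂ)^2 + (s:ℂ)^2 = 1 := by exact_mod_cast by push_cast; linear_combination (h2 : s^2 + c^2 = (1:ℝ))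
  have hH : P.IsHermitian := by
    rw [Matrix.IsHermitian]
    ext i j
    fin_cases i <;> fin_cases j <;>
      simp [hPdef, Matrix.conjTranspose_apply, hq, hq2, Complex.conj_ofReal]
  set v := Ωvec γ with hv
  set a := (P ⊗ₖ (1:M2)) *ᵥ v with ha
  set b := (((1:M2) - P) ⊗ₖ (1:M2)) *ᵥ v with hb
  have hM : Ωstate γ - postMeas P (Ωstate γ) = proj v - proj a - proj b := by
    rw [Ωstate, postMeas_proj P hH, ← hv, ← ha, ← hb, sub_add_eq_sub_sub]
  rw [hsin, hs2, hM]
  have hherm : (proj v - proj a - proj b)ᴴ = proj v - proj a - proj b := by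
    simp [Matrix.conjTranspose_sub, proj_hermitian]
  rw [hherm]
  have key : Matrix.trace ((proj v - proj a - proj b) * (proj v - proj a - proj b))
      = (((1 - (c^2-s^2)^2*(2*p-1)^2)/2 : ℝ) : ℂ) := by
    simp only [Matrix.sub_mul, Matrix.mul_sub, Matrix.trace_sub, trace_proj_mul]
    simp only [ha, hb, hv, hPdef, Ωvec, up, dn, Matrix.mulVec, dotProduct,
      Pi.star_apply, Matrix.kroneckerMap_apply, Matrix.one_apply,
      Fintype.sum_prod_type, Fin.sum_univ_two,
      Matrix.cons_val', Matrix.cons_val_zero, Matrix.cons_val_one, Matrix.head_cons,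
      Matrix.empty_val', Matrix.cons_val_fin_one, Matrix.head_fin_const, Fin.isValue,
      Matrix.sub_apply, Prod.mk.injEq, map_add, map_sub, _root_.map_mul, _root_.map_one, map_pow,
      Complex.conj_ofReal, RCLike.star_def, hq, hq2, ← hc, ← hs']
    push_cast
    norm_num
    ring_nf
    simp only [hq, hq2]
    linear_combination ((2)*(s:ℂ)^4 + (4)*(s:ℂ)^4*q*r + (-4)*(s:ℂ)^4*(p:ℂ) + (4)*(s:ℂ)^4*(p:ℂ)^2 + (4)*(c:ℂ)^2*(s:ℂ)^2 + (8)*(c:ℂ)^2*(s:ℂ)^2*q*r + (-8)*(c:ℂ)^2*(s:ℂ)^2*(p:ℂ) + (8)*(c:ℂ)^2*(s:ℂ)^2*(p:ℂ)^2 + (2)*(c:ℂ)^4 + (4)*(c:ℂ)^4*q*r + (-4)*(c:ℂ)^4*(p:ℂ) + (4)*(c:ℂ)^4*(p:ℂ)^2) * hqr + ((1/2) + (1/2)*(s:ℂ)^2 + (1/2)*(c:ℂ)^2) * hcs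
  rw [key, Complex.ofReal_re]

lemma omega0_apply (a b : Fin 2 × Fin 2) :
    Ωstate 0 a b = if a.1 = a.2 ∧ b.1 = b.2 then 1/2 else 0 := by
  obtain ⟨i,j⟩ := a; obtain ⟨k,l⟩ := b
  have e : Real.pi/4 - 0/2 = Real.pi/4 := by ring
  have h2 : (Real.sqrt 2 : ℝ) * Real.sqrt 2 = 2 := Real.mul_self_sqrt (by norm_num)
  fin_cases i <;> fin_cases j <;> fin_cases k <;> fin_cases l <;>
    simp [Ωstate, proj, Ωvec, up, dn, Matrix.vecMulVec_apply, e,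
        Real.cos_pi_div_four, Real.sin_pi_div_four, map_ofNat, map_div₀,
        ← Complex.ofReal_ofNat, ← Complex.ofReal_div, Complex.ext_iff] <;>
    · norm_num
      linear_combination h2/4

lemma rhoW_decomp (F : ℝ) :
    ρW F = ((((1-(4*F-1)/3)/4 : ℝ)):ℂ) • (1:M4) + (((4*F-1)/3 : ℝ):ℂ) • Ωstate 0 := by
  ext a b
  rw [Matrix.add_apply, Matrix.smul_apply, Matrix.smul_apply, omega0_apply]
  obtain ⟨i,j⟩ := a; obtain ⟨k,l⟩ := b
  fin_cases i <;> fin_cases j <;> fin_cases k <;> fin_cases l <;>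
    · norm_num [ρW, σ1, σ2, σ3, Matrix.kroneckerMap_apply, Matrix.one_apply,
        Matrix.smul_apply, Matrix.add_apply, Matrix.sub_apply, Prod.mk.injEq,
        Prod.ext_iff, Prod.fst_zero, Prod.snd_zero, Complex.ext_iff]
      try ring

lemma postMeas_one (P : M2) (hid : P * P = P) : postMeas P (1 : M4) = 1 := by
  rw [postMeas, Matrix.mul_one, Matrix.mul_one, ← Matrix.mul_kronecker_mul,
    ← Matrix.mul_kronecker_mul, Matrix.mul_one, hid]
  have h : (1 - P) * (1 - P) = 1 - P := by
    simp only [Matrix.mul_sub, Matrix.sub_mul, Matrix.mul_one, Matrix.one_mul, hid]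
    abel
  have h2 : P + (1 - P) = (1 : M2) := by abel
  rw [h, ← Matrix.add_kronecker, h2, Matrix.one_kronecker_one]

lemma postMeas_add_smul (P : M2) (u w : ℂ) (A B : M4) :
    postMeas P (u • A + w • B) = u • postMeas P A + w • postMeas P B := by
  simp only [postMeas, Matrix.mul_add, Matrix.add_mul, Matrix.mul_smul, Matrix.smul_mul,
    smul_add]
  abel

lemma hs2_smul (t : ℝ) (A : M4) : hs2 ((t:ℂ) • A) = t^2 * hs2 A := by
  rw [hs2, hs2, Matrix.conjTranspose_smul, Matrix.smul_mul, Matrix.mul_smul,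
    Matrix.trace_smul, Matrix.trace_smul]
  simp [smul_smul, Complex.conj_ofReal, ← Complex.ofReal_mul, Complex.re_ofReal_mul, sq]
  ring

lemma P_decomp (P : M2) (hH : P.IsHermitian) (hid : P * P = P) (htr : P.trace = 1) :
    ∃ (p : ℝ) (q : ℂ), P = !![(p:ℂ), q; (starRingEnd ℂ) q, 1-(p:ℂ)] ∧
      q * (starRingEnd ℂ) q = (p:ℂ) - (p:ℂ)^2 ∧ 0 ≤ p ∧ p ≤ 1 := by
  set p := (P 0 0).re with hp
  have h00 : P 0 0 = (p:ℂ) := by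
    have := hH.apply 0 0
    rw [RCLike.star_def] at this
    exact ((Complex.conj_eq_iff_re).mp this).symm
  have h10 : P 1 0 = (starRingEnd ℂ) (P 0 1) := by
    have := hH.apply 1 0
    rw [RCLike.star_def] at this
    exact this.symm
  rw [Matrix.trace_fin_two] at htr
  have h11 : P 1 1 = 1 - (p:ℂ) := by rw [← h00]; linear_combination htr
  have hq : P 0 1 * (starRingEnd ℂ) (P 0 1) = (p:ℂ) - (p:ℂ)^2 := by
    have h := congrFun (congrFun hid 0) 0
    rw [Matrix.mul_apply, Fin.sum_univ_two, h10] at h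
    linear_combination h + (1 - (p:ℂ) - P 0 0) * h00
  have hns : Complex.normSq (P 0 1) = p - p^2 := by
    have := hq
    rw [Complex.mul_conj] at this
    exact_mod_cast this
  have hnn := Complex.normSq_nonneg (P 0 1)
  refine ⟨p, P 0 1, ?_, hq, by nlinarith, by nlinarith⟩
  ext i j
  fin_cases i <;> fin_cases j <;>
    simp [h00, h10, h11]

lemma corr_eq (ρ : M4) (A B : M2) :
    corr ρ A B = (∑ p : Fin 2 × Fin 2, ∑ q : Fin 2 × Fin 2,
      ρ p q * (A q.1 p.1 * B q.2 p.2)).re := by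
  simp [corr, trace_mul_eq', Matrix.kroneckerMap_apply]

lemma cosEq (γ : ℝ) : Real.cos γ = 2 * Real.sin (Real.pi/4 - γ/2) * Real.cos (Real.pi/4 - γ/2) := by
  rw [← Real.sin_two_mul, show 2*(Real.pi/4 - γ/2) = Real.pi/2 - γ by ring, Real.sin_pi_div_two_sub]

set_option maxHeartbeats 1000000 in
lemma corr_omega_1 (γ : ℝ) (n : Fin 3 → ℝ) :
    corr (Ωstate γ) σ1 (pdot n) = Real.cos γ * n 0 := by
  rw [corr_eq, cosEq]
  simp only [Ωstate, proj, Ωvec, pdot, σ, σ1, σ2, σ3, up, dn,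
    Fintype.sum_prod_type, Fin.sum_univ_two, Fin.sum_univ_three,
    Matrix.vecMulVec_apply, Matrix.smul_apply, Matrix.add_apply, Matrix.sum_apply, smul_eq_mul]
  norm_num [Complex.conj_ofReal, -Complex.ofReal_cos, -Complex.ofReal_sin, Matrix.cons_val_two, Matrix.tail_cons, Matrix.head_cons]
  ring

set_option maxHeartbeats 1000000 in
lemma corr_omega_2 (γ : ℝ) (n : Fin 3 → ℝ) :
    corr (Ωstate γ) σ2 (pdot n) = -(Real.cos γ * n 1) := by
  rw [corr_eq, cosEq]
  simp only [Ωstate, proj, Ωvec, pdot, σ, σ1, σ2, σ3, up, dn,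
    Fintype.sum_prod_type, Fin.sum_univ_two, Fin.sum_univ_three,
    Matrix.vecMulVec_apply, Matrix.smul_apply, Matrix.add_apply, Matrix.sum_apply, smul_eq_mul]
  norm_num [Complex.conj_ofReal, -Complex.ofReal_cos, -Complex.ofReal_sin, Matrix.cons_val_two, Matrix.tail_cons, Matrix.head_cons]
  ring

lemma corr_one_1 (n : Fin 3 → ℝ) : corr (1:M4) σ1 (pdot n) = 0 := by
  rw [corr_eq]
  simp only [pdot, σ, σ1, σ2, σ3, Matrix.one_apply,
    Fintype.sum_prod_type, Fin.sum_univ_two, Fin.sum_univ_three,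
    Matrix.smul_apply, Matrix.sum_apply, smul_eq_mul, Prod.mk.injEq]
  norm_num

lemma corr_one_2 (n : Fin 3 → ℝ) : corr (1:M4) σ2 (pdot n) = 0 := by
  rw [corr_eq]
  simp only [pdot, σ, σ1, σ2, σ3, Matrix.one_apply,
    Fintype.sum_prod_type, Fin.sum_univ_two, Fin.sum_univ_three,
    Matrix.smul_apply, Matrix.sum_apply, smul_eq_mul, Prod.mk.injEq]
  norm_num

lemma corr_smul_add (u w : ℝ) (A B : M2) (ρ1 ρ2 : M4) :
    corr ((u:ℂ) • ρ1 + (w:ℂ) • ρ2) A B = u * corr ρ1 A B + w * corr ρ2 A B := by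
  simp [corr, Matrix.add_mul, Matrix.smul_mul, Matrix.trace_add, Matrix.trace_smul,
    Complex.re_ofReal_mul]

lemma sSup_corr_helper (g : (Fin 3 → ℝ) → ℝ) (K : ℝ) (m : Fin 3 → ℝ)
    (hm : (∑ i, m i ^ 2) = 1) (hval : g m = K)
    (hub : ∀ n : Fin 3 → ℝ, (∑ i, n i ^ 2) = 1 → g n ≤ K) :
    sSup {r : ℝ | ∃ n : Fin 3 → ℝ, (∑ i, n i ^ 2) = 1 ∧ r = g n} = K := by
  apply IsGreatest.csSup_eq
  exact ⟨⟨m, hm, hval.symm⟩, by rintro r ⟨n, hn, rfl⟩; exact hub n hn⟩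

/-- canonical rank-one projector witness -/
def Pw : M2 := !![((1:ℝ):ℂ), (0:ℂ); (starRingEnd ℂ) 0, 1-((1:ℝ):ℂ)]

lemma Pw_herm : Pw.IsHermitian := by
  rw [Matrix.IsHermitian]
  ext i j
  fin_cases i <;> fin_cases j <;> simp [Pw, Matrix.conjTranspose_apply]

lemma Pw_idem : Pw * Pw = Pw := by
  ext i j
  fin_cases i <;> fin_cases j <;> simp [Pw, Matrix.mul_apply, Fin.sum_univ_two]

lemma Pw_trace : Pw.trace = 1 := by
  simp [Pw, Matrix.trace_fin_two]

lemma Dg_omega (γ : ℝ) : Dg (Ωstate γ) = Real.cos γ ^ 2 / 2 := by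
  have hpy := Real.sin_sq_add_cos_sq γ
  apply IsLeast.csInf_eq
  constructor
  · refine ⟨Pw, Pw_herm, Pw_idem, Pw_trace, ?_⟩
    rw [show Pw = !![((1:ℝ):ℂ), (0:ℂ); (0:ℂ), 1-((1:ℝ):ℂ)] by
        ext i j; fin_cases i <;> fin_cases j <;> simp [Pw]]
    rw [hs2_omega γ 1 0 0 (by simp) (by norm_num)]
    nlinarith
  · rintro r ⟨P, hH, hid, htr, rfl⟩
    obtain ⟨p, q, rfl, hqr, hp0, hp1⟩ := P_decomp P hH hid htr
    rw [hs2_omega γ p q _ rfl hqr]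
    have h1 : (2*p-1)^2 ≤ 1 := by nlinarith
    have h2 : Real.sin γ^2*(2*p-1)^2 ≤ Real.sin γ^2 :=
      mul_le_of_le_one_right (sq_nonneg _) h1
    nlinarith

lemma Dg_werner (F : ℝ) : Dg (ρW F) = ((4*F-1)/3)^2 / 2 := by
  set t : ℝ := (4*F-1)/3 with ht
  have hval : ∀ P : M2, P.IsHermitian → P * P = P → P.trace = 1 →
      hs2 (ρW F - postMeas P (ρW F)) = t^2/2 := by
    intro P hH hid htr
    have hdiff : ρW F - postMeas P (ρW F) = (t:ℂ) • (Ωstate 0 - postMeas P (Ωstate 0)) := by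
      rw [rhoW_decomp F, postMeas_add_smul, postMeas_one P hid, smul_sub, ← ht]
      abel
    obtain ⟨p, q, rfl, hqr, hp0, hp1⟩ := P_decomp P hH hid htr
    rw [hdiff, hs2_smul, hs2_omega 0 p q _ rfl hqr]
    norm_num
    ring
  apply IsLeast.csInf_eq
  constructor
  · exact ⟨Pw, Pw_herm, Pw_idem, Pw_trace, (hval Pw Pw_herm Pw_idem Pw_trace).symm⟩
  · rintro r ⟨P, hH, hid, htr, rfl⟩
    rw [hval P hH hid htr]

/-- δ_min = (1 − √(2 D_g))/2 for both the pure state and the Werner state. -/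
theorem error_rate_discord_relation (γ F : ℝ) (hγ : 0 ≤ γ) (hγ' : γ ≤ Real.pi/2)
    (hF : 1/4 ≤ F) (hF1 : F ≤ 1) :
    δmin (Ωstate γ) = (1 - Real.sqrt (2 * Dg (Ωstate γ)))/2 ∧
    δmin (ρW F) = (1 - Real.sqrt (2 * Dg (ρW F)))/2 := by
  have hπ := Real.pi_pos
  have hcos : 0 ≤ Real.cos γ := Real.cos_nonneg_of_mem_Icc ⟨by linarith, hγ'⟩
  set t : ℝ := (4*F-1)/3 with ht
  have ht0 : 0 ≤ t := by rw [ht]; linarith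
  have ht1 : t ≤ 1 := by rw [ht]; linarith
  constructor
  · -- pure state
    rw [Dg_omega, show 2 * (Real.cos γ^2/2) = Real.cos γ^2 by ring,
      Real.sqrt_sq hcos, δmin]
    rw [sSup_corr_helper _ (Real.cos γ) ![1,0,0]
        (by norm_num [Fin.sum_univ_three, Matrix.cons_val_two, Matrix.tail_cons, Matrix.head_cons])
        (by rw [corr_omega_1]; norm_num)
        (fun n hn => by
          rw [corr_omega_1]
          rw [Fin.sum_univ_three] at hn
          nlinarith [sq_nonneg (n 0 - 1), sq_nonneg (n 1), sq_nonneg (n 2),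
            mul_nonneg hcos (show (0:ℝ) ≤ 1 - n 0 by nlinarith)])]
    rw [sSup_corr_helper _ (Real.cos γ) ![0,-1,0]
        (by norm_num [Fin.sum_univ_three, Matrix.cons_val_two, Matrix.tail_cons, Matrix.head_cons])
        (by rw [corr_omega_2]; norm_num)
        (fun n hn => by
          rw [corr_omega_2]
          rw [Fin.sum_univ_three] at hn
          nlinarith [mul_nonneg hcos (show (0:ℝ) ≤ 1 + n 1 by nlinarith)])]
    ring
  · -- Werner state
    have hc1 : ∀ n : Fin 3 → ℝ, corr (ρW F) σ1 (pdot n) = t * n 0 := by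
      intro n
      rw [rhoW_decomp F, corr_smul_add, corr_one_1, corr_omega_1, ← ht]
      norm_num
    have hc2 : ∀ n : Fin 3 → ℝ, corr (ρW F) σ2 (pdot n) = -(t * n 1) := by
      intro n
      rw [rhoW_decomp F, corr_smul_add, corr_one_2, corr_omega_2, ← ht]
      norm_num
    rw [Dg_werner, ← ht, show 2 * (t^2/2) = t^2 by ring, Real.sqrt_sq ht0, δmin]
    rw [sSup_corr_helper (fun n => corr (ρW F) σ1 (pdot n)) t ![1,0,0]
        (by norm_num [Fin.sum_univ_three, Matrix.cons_val_two, Matrix.tail_cons, Matrix.head_cons])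
        (by simp only [hc1]; norm_num)
        (fun n hn => by
          simp only [hc1]
          rw [Fin.sum_univ_three] at hn
          nlinarith [mul_nonneg ht0 (show (0:ℝ) ≤ 1 - n 0 by nlinarith)])]
    rw [sSup_corr_helper (fun n => corr (ρW F) σ2 (pdot n)) t ![0,-1,0]
        (by norm_num [Fin.sum_univ_three, Matrix.cons_val_two, Matrix.tail_cons, Matrix.head_cons])
        (by simp only [hc2]; norm_num)
        (fun n hn => by
          simp only [hc2]
          rw [Fin.sum_univ_three] at hn
          nlinarith [mul_nonneg ht0 (show (0:ℝ) ≤ 1 + n 1 by nlinarith)])]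
    ring
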